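/- Let m ≥ 1, let Ω ⊆ ℂ^m be open and x₀ ∈ Ω, and let d ≥ 1. For each i ∈ {1,…,d} let νᵢ ≥ 1 and let A_{i,0},…,A_{i,νᵢ} : Ω → ℂ be holomorphic; set Ψᵢ(x,w) = Σ_{j=0}^{νᵢ} A_{i,j}(x)·wʲ. Assume that for every i one has A_{i,νᵢ}(x₀) ≠ 0 and the polynomial w ↦ Ψᵢ(x₀,w) has νᵢ pairwise distinct complex roots. Put ν = ν₁·…·ν_d. Then there exist an open neighborhood U ⊆ Ω of x₀ and holomorphic maps u₁,…,u_ν : U → ℂ^d such that for every x ∈ U the values u₁(x),…,u_ν(x) are pairwise distinct and {w ∈ ℂ^d : Ψᵢ(x,wᵢ) = 0 for all i ∈ {1,…,d}} = {u₁(x),…,u_ν(x)}. -/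

import Mathlib

open Polynomial in
lemma polyRootsAux (n : ℕ) (c : ℕ → ℂ) (hc : c n ≠ 0) (v : Fin n → ℂ)
    (hv : Function.Injective v)
    (hroots : ∀ k, ∑ j ∈ Finset.range (n + 1), c j * v k ^ j = 0) :
    (∀ w : ℂ, ∑ j ∈ Finset.range (n + 1), c j * w ^ j = 0 ↔ ∃ k, w = v k) ∧
    (∀ k, ∑ j ∈ Finset.range (n + 1), (j : ℂ) * c j * v k ^ (j - 1) ≠ 0) := by
  classical
  set q : ℂ[X] := ∑ j ∈ Finset.range (n + 1), C (c j) * X ^ j with hqdef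
  have heval : ∀ w : ℂ, q.eval w = ∑ j ∈ Finset.range (n + 1), c j * w ^ j := by
    intro w; simp [hqdef, eval_finset_sum]
  have hcoeff : q.coeff n = c n := by
    simp [hqdef, finset_sum_coeff, coeff_C_mul, coeff_X_pow]
  have hq0 : q ≠ 0 := fun h => hc (by rw [← hcoeff, h, coeff_zero])
  have hdeg : q.natDegree ≤ n := by
    apply natDegree_sum_le_of_forall_le
    intro j hj
    exact (natDegree_C_mul_X_pow_le _ _).trans (Nat.lt_succ_iff.mp (Finset.mem_range.mp hj))
  set t : Finset ℂ := Finset.univ.image v with htdef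
  have htcard : t.card = n := by
    rw [htdef, Finset.card_image_of_injective _ hv, Finset.card_univ, Fintype.card_fin]
  have hmemroots : ∀ k, v k ∈ q.roots := by
    intro k
    rw [mem_roots hq0]
    show q.eval (v k) = 0
    rw [heval]; exact hroots k
  have hsub : t.val ≤ q.roots := by
    rw [Finset.val_le_iff_val_subset]
    intro a ha
    obtain ⟨k, _, hk⟩ := Finset.mem_image.mp (show a ∈ Finset.univ.image v from ha)
    exact hk ▸ hmemroots k
  have hcard : Multiset.card q.roots ≤ n := (card_roots' q).trans hdeg
  have heqm : t.val = q.roots :=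
    Multiset.eq_of_le_of_card_le hsub (by simpa [htcard] using hcard)
  constructor
  · intro w
    constructor
    · intro hw
      have hmem : w ∈ q.roots := (mem_roots hq0).mpr (by show q.eval w = 0; rw [heval]; exact hw)
      rw [← heqm] at hmem
      obtain ⟨k, _, hk⟩ := Finset.mem_image.mp (show w ∈ Finset.univ.image v from hmem)
      exact ⟨k, hk.symm⟩
    · rintro ⟨k, rfl⟩
      exact hroots k
  · intro k
    have hmult : rootMultiplicity (v k) q = 1 := by
      rw [← count_roots, ← heqm]
      exact Multiset.count_eq_one_of_mem t.nodup (Finset.mem_val.mpr (Finset.mem_image_of_mem v (Finset.mem_univ k)))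
    have hder : ¬(derivative q).IsRoot (v k) := by
      intro hd
      have h1 : 1 < rootMultiplicity (v k) q :=
        (one_lt_rootMultiplicity_iff_isRoot hq0).mpr
          ⟨isRoot_of_mem_roots (hmemroots k), hd⟩
      omega
    intro hcontra
    apply hder
    show (derivative q).eval (v k) = 0
    rw [hqdef, derivative_sum]
    simp only [derivative_C_mul_X_pow, eval_finset_sum, eval_mul, eval_C, eval_pow, eval_X]
    rw [← hcontra]
    apply Finset.sum_congr rfl
    intro j _
    ring

lemma keyT {E : Type*} [NormedAddCommGroup E] [NormedSpace ℂ E]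
    (T : (E × ℂ) →L[ℂ] ℂ) (ξ : E) (b : ℂ) :
    T (ξ, b) = T (ξ, 0) + b * T (0, 1) := by
  have h : ((ξ, b) : E × ℂ) = ((ξ, 0) : E × ℂ) + b • ((0 : E), (1 : ℂ)) := by
    simp [Prod.ext_iff]
  rw [h, map_add, map_smul, smul_eq_mul]

noncomputable def prodEquivAux {E : Type*} [NormedAddCommGroup E] [NormedSpace ℂ E]
    (T : (E × ℂ) →L[ℂ] ℂ) (ha : T (0, 1) ≠ 0) : (E × ℂ) ≃L[ℂ] (E × ℂ) :=
  ContinuousLinearEquiv.equivOfInverse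
    ((ContinuousLinearMap.fst ℂ E ℂ).prod T)
    ((ContinuousLinearMap.fst ℂ E ℂ).prod
      ((T (0, 1))⁻¹ • (ContinuousLinearMap.snd ℂ E ℂ -
        T.comp ((ContinuousLinearMap.fst ℂ E ℂ).prod 0))))
    (by
      intro z
      have key := keyT T z.1 z.2
      refine Prod.ext (by simp) ?_
      simp only [ContinuousLinearMap.prod_apply, ContinuousLinearMap.coe_fst',
        ContinuousLinearMap.smul_apply, ContinuousLinearMap.sub_apply,
        ContinuousLinearMap.coe_snd', ContinuousLinearMap.comp_apply,
        ContinuousLinearMap.zero_apply, smul_eq_mul]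
      rw [show T z = T (z.1, z.2) by rw [Prod.mk.eta], key]
      field_simp
      ring)
    (by
      intro z
      refine Prod.ext (by simp) ?_
      simp only [ContinuousLinearMap.prod_apply, ContinuousLinearMap.coe_fst',
        ContinuousLinearMap.smul_apply, ContinuousLinearMap.sub_apply,
        ContinuousLinearMap.coe_snd', ContinuousLinearMap.comp_apply,
        ContinuousLinearMap.zero_apply, smul_eq_mul]
      rw [keyT T z.1 _]
      field_simp
      ring)

lemma prodEquivAux_coe {E : Type*} [NormedAddCommGroup E] [NormedSpace ℂ E]
    (T : (E × ℂ) →L[ℂ] ℂ) (ha : T (0, 1) ≠ 0) :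
    (prodEquivAux T ha : (E × ℂ) →L[ℂ] (E × ℂ)) = (ContinuousLinearMap.fst ℂ E ℂ).prod T :=
  rfl

lemma exists_root_fun (n : ℕ) (c₀ : Fin (n + 1) → ℂ) (r : ℂ)
    (hroot : ∑ j : Fin (n + 1), c₀ j * r ^ (j : ℕ) = 0)
    (hsimple : ∑ j : Fin (n + 1), ((j : ℕ) : ℂ) * c₀ j * r ^ ((j : ℕ) - 1) ≠ 0) :
    ∃ V : Set (Fin (n + 1) → ℂ), IsOpen V ∧ c₀ ∈ V ∧
      ∃ ρ : (Fin (n + 1) → ℂ) → ℂ, DifferentiableOn ℂ ρ V ∧ ρ c₀ = r ∧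
        ∀ c ∈ V, ∑ j : Fin (n + 1), c j * (ρ c) ^ (j : ℕ) = 0 := by
  classical
  set F : ((Fin (n + 1) → ℂ) × ℂ) → ℂ := fun p => ∑ j : Fin (n + 1), p.1 j * p.2 ^ (j : ℕ)
    with hFdef
  have hFdiff : ContDiff ℂ ⊤ F := by
    apply ContDiff.sum
    intro j _
    exact (((contDiff_pi.mp contDiff_id) j).comp contDiff_fst).mul (contDiff_snd.pow _)
  have hFs : ∀ p, HasStrictFDerivAt F (fderiv ℂ F p) p := fun p =>
    hFdiff.contDiffAt.hasStrictFDerivAt (by simp)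
  have hD : ∀ p : (Fin (n + 1) → ℂ) × ℂ, fderiv ℂ F p (0, 1)
      = ∑ j : Fin (n + 1), p.1 j * (((j : ℕ) : ℂ) * p.2 ^ ((j : ℕ) - 1)) := by
    intro p
    have hφ : HasFDerivAt (fun w : ℂ => ((p.1, w) : (Fin (n + 1) → ℂ) × ℂ))
        ((0 : ℂ →L[ℂ] (Fin (n + 1) → ℂ)).prod (ContinuousLinearMap.id ℂ ℂ)) p.2 :=
      (hasFDerivAt_const _ _).prodMk (hasFDerivAt_id _)
    have hcomp : HasFDerivAt (fun w : ℂ => F (p.1, w))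
        ((fderiv ℂ F p).comp
          ((0 : ℂ →L[ℂ] (Fin (n + 1) → ℂ)).prod (ContinuousLinearMap.id ℂ ℂ))) p.2 := by
      have := ((hFs (p.1, p.2)).hasFDerivAt).comp p.2 hφ
      exact this
    have h1 : HasDerivAt (fun w : ℂ => F (p.1, w)) (fderiv ℂ F p (0, 1)) p.2 := by
      have := hcomp.hasDerivAt
      simpa using this
    have h2 : HasDerivAt (fun w : ℂ => F (p.1, w))
        (∑ j : Fin (n + 1), p.1 j * (((j : ℕ) : ℂ) * p.2 ^ ((j : ℕ) - 1))) p.2 := by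
      have heq : (fun w : ℂ => F (p.1, w))
          = fun w => ∑ j : Fin (n + 1), p.1 j * w ^ (j : ℕ) := rfl
      rw [heq]
      exact HasDerivAt.fun_sum fun j _ => (hasDerivAt_pow (j : ℕ) p.2).const_mul (p.1 j)
    exact h1.unique h2
  set p₀ : (Fin (n + 1) → ℂ) × ℂ := (c₀, r) with hp₀
  have ha₀ : fderiv ℂ F p₀ (0, 1) ≠ 0 := by
    rw [hD]
    intro h
    apply hsimple
    rw [← h]
    exact Finset.sum_congr rfl fun j _ => by ring
  set G : ((Fin (n + 1) → ℂ) × ℂ) → ((Fin (n + 1) → ℂ) × ℂ) := fun p => (p.1, F p) with hGdef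
  have hGs : ∀ (p) (hp : fderiv ℂ F p (0, 1) ≠ 0),
      HasStrictFDerivAt G ((prodEquivAux (fderiv ℂ F p) hp :
        ((Fin (n + 1) → ℂ) × ℂ) ≃L[ℂ] ((Fin (n + 1) → ℂ) × ℂ)) :
          ((Fin (n + 1) → ℂ) × ℂ) →L[ℂ] ((Fin (n + 1) → ℂ) × ℂ)) p := by
    intro p hp
    rw [prodEquivAux_coe]
    exact ((ContinuousLinearMap.fst ℂ (Fin (n + 1) → ℂ) ℂ).hasStrictFDerivAt).prodMk (hFs p)
  have hG0 := hGs p₀ ha₀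
  set Φ := hG0.toOpenPartialHomeomorph G with hΦdef
  have hΦcoe : (Φ : ((Fin (n + 1) → ℂ) × ℂ) → ((Fin (n + 1) → ℂ) × ℂ)) = G :=
    hG0.toOpenPartialHomeomorph_coe
  have hsrc : p₀ ∈ Φ.source := hG0.mem_toOpenPartialHomeomorph_source
  have hFp₀ : F p₀ = 0 := hroot
  have hΦp₀ : Φ p₀ = (c₀, 0) := by
    rw [hΦcoe]
    show (p₀.1, F p₀) = (c₀, 0)
    rw [hFp₀]
  set Dset : Set ((Fin (n + 1) → ℂ) × ℂ) := {p | fderiv ℂ F p (0, 1) ≠ 0} with hDsetdef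
  have hDopen : IsOpen Dset := by
    have hcont : Continuous fun p : (Fin (n + 1) → ℂ) × ℂ =>
        ∑ j : Fin (n + 1), p.1 j * (((j : ℕ) : ℂ) * p.2 ^ ((j : ℕ) - 1)) := by
      apply continuous_finset_sum
      intro j _
      exact ((continuous_apply j).comp continuous_fst).mul
        (continuous_const.mul (continuous_snd.pow _))
    have heq : Dset = (fun p : (Fin (n + 1) → ℂ) × ℂ =>
        ∑ j : Fin (n + 1), p.1 j * (((j : ℕ) : ℂ) * p.2 ^ ((j : ℕ) - 1))) ⁻¹' {(0 : ℂ)}ᶜ := by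
      ext p
      simp [hDsetdef, hD]
    rw [heq]
    exact isOpen_compl_singleton.preimage hcont
  set W := Φ.target ∩ Φ.symm ⁻¹' (Dset ∩ Φ.source) with hWdef
  have hWopen : IsOpen W := Φ.isOpen_inter_preimage_symm (hDopen.inter Φ.open_source)
  set V := (fun c : Fin (n + 1) → ℂ => ((c, 0) : (Fin (n + 1) → ℂ) × ℂ)) ⁻¹' W with hVdef
  have hVopen : IsOpen V := hWopen.preimage (continuous_id.prodMk continuous_const)
  have hsymm0 : Φ.symm (c₀, 0) = p₀ := by rw [← hΦp₀]; exact Φ.left_inv hsrc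
  have hmemV : c₀ ∈ V := by
    have htg : ((c₀, 0) : (Fin (n + 1) → ℂ) × ℂ) ∈ Φ.target := by
      rw [← hΦp₀]; exact Φ.map_source hsrc
    exact ⟨htg, by rw [Set.mem_preimage, hsymm0]; exact ⟨ha₀, hsrc⟩⟩
  have hfact : ∀ c ∈ V, (Φ.symm (c, 0)).1 = c ∧ F (Φ.symm (c, 0)) = 0 := by
    intro c hc
    have hri : Φ (Φ.symm (c, 0)) = (c, 0) := Φ.right_inv hc.1
    rw [hΦcoe] at hri
    have h1 : (Φ.symm (c, 0)).1 = c := congrArg Prod.fst hri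
    have h2 : F (Φ.symm (c, 0)) = 0 := congrArg Prod.snd hri
    exact ⟨h1, h2⟩
  refine ⟨V, hVopen, hmemV, fun c => (Φ.symm (c, 0)).2, ?_, by show (Φ.symm (c₀, 0)).2 = r; rw [hsymm0], ?_⟩
  · -- differentiability
    intro c₁ hc₁
    have htgt : ((c₁, 0) : (Fin (n + 1) → ℂ) × ℂ) ∈ Φ.target := hc₁.1
    have hDq : Φ.symm (c₁, 0) ∈ Dset ∧ Φ.symm (c₁, 0) ∈ Φ.source := hc₁.2
    have hG₁ : HasFDerivAt G
        ((prodEquivAux (fderiv ℂ F (Φ.symm (c₁, 0))) hDq.1 :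
          ((Fin (n + 1) → ℂ) × ℂ) ≃L[ℂ] ((Fin (n + 1) → ℂ) × ℂ)) :
            ((Fin (n + 1) → ℂ) × ℂ) →L[ℂ] ((Fin (n + 1) → ℂ) × ℂ)) (Φ.symm (c₁, 0)) :=
      (hGs _ hDq.1).hasFDerivAt
    have hcont : ContinuousAt Φ.symm (c₁, 0) := Φ.symm.continuousAt htgt
    have hev : ∀ᶠ y in nhds ((c₁, 0) : (Fin (n + 1) → ℂ) × ℂ), G (Φ.symm y) = y := by
      filter_upwards [Φ.open_target.mem_nhds htgt] with y hy
      rw [← hΦcoe]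
      exact Φ.right_inv hy
    have hsymmD : HasFDerivAt Φ.symm
        (((prodEquivAux (fderiv ℂ F (Φ.symm (c₁, 0))) hDq.1).symm :
          ((Fin (n + 1) → ℂ) × ℂ) ≃L[ℂ] ((Fin (n + 1) → ℂ) × ℂ)) :
            ((Fin (n + 1) → ℂ) × ℂ) →L[ℂ] ((Fin (n + 1) → ℂ) × ℂ)) (c₁, 0) :=
      HasFDerivAt.of_local_left_inverse hcont hG₁ hev
    have d1 : DifferentiableAt ℂ (fun c : Fin (n + 1) → ℂ => Φ.symm (c, 0)) c₁ :=
      hsymmD.differentiableAt.comp c₁ (differentiableAt_id.prodMk (differentiableAt_const _))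
    exact d1.snd.differentiableWithinAt
  · -- root property
    intro c hc
    obtain ⟨h1, h2⟩ := hfact c hc
    have hpair : ((c, (Φ.symm (c, 0)).2) : (Fin (n + 1) → ℂ) × ℂ) = Φ.symm (c, 0) :=
      Prod.ext h1.symm rfl
    show F (c, (Φ.symm (c, 0)).2) = 0
    rw [hpair]
    exact h2

/-- **Corollary 2.8 (analytic content)**: at a regular point `x₀` (nonvanishing leading
coefficients and `νᵢ` pairwise distinct roots of each defining polynomial), there exist,
on a neighborhood `U` of `x₀`, exactly `ν = ν₁⋯ν_d` holomorphic maps `u₁, …, u_ν : U → ℂ^d`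
with pairwise distinct values whose values are exactly the simultaneous solutions of the
system `Ψᵢ(x, wᵢ) = 0`, `i = 1, …, d`. -/
theorem regular_point_nu_regular_elements
    (m d : ℕ) (hm : 1 ≤ m) (hd : 1 ≤ d)
    (Ω : Set (Fin m → ℂ)) (hΩ : IsOpen Ω) (x₀ : Fin m → ℂ) (hx₀ : x₀ ∈ Ω)
    (ν : Fin d → ℕ) (hν : ∀ i, 1 ≤ ν i)
    (A : Fin d → ℕ → (Fin m → ℂ) → ℂ)
    (hA : ∀ i : Fin d, ∀ j ≤ ν i, DifferentiableOn ℂ (A i j) Ω)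
    (hlead : ∀ i : Fin d, A i (ν i) x₀ ≠ 0)
    (hdistinct : ∀ i : Fin d, ∃ r : Fin (ν i) → ℂ, Function.Injective r ∧
      ∀ w : ℂ, (∑ j ∈ Finset.range (ν i + 1), A i j x₀ * w ^ j = 0 ↔ ∃ k, w = r k)) :
    ∃ U : Set (Fin m → ℂ), IsOpen U ∧ U ⊆ Ω ∧ x₀ ∈ U ∧
      ∃ u : Fin (∏ i, ν i) → (Fin m → ℂ) → (Fin d → ℂ),
        (∀ k, DifferentiableOn ℂ (u k) U) ∧
        ∀ x ∈ U, Function.Injective (fun k => u k x) ∧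
          {w : Fin d → ℂ |
              ∀ i : Fin d, ∑ j ∈ Finset.range (ν i + 1), A i j x * w i ^ j = 0}
            = Set.range (fun k => u k x) := by
  classical
  choose r hrinj hrspec using hdistinct
  have hsimple : ∀ (i : Fin d) (k : Fin (ν i)),
      ∑ j ∈ Finset.range (ν i + 1), (j : ℂ) * A i j x₀ * (r i k) ^ (j - 1) ≠ 0 := fun i k =>
    (polyRootsAux (ν i) (fun j => A i j x₀) (hlead i) (r i) (hrinj i)
      (fun k => (hrspec i (r i k)).mpr ⟨k, rfl⟩)).2 k
  have hloc : ∀ (i : Fin d) (k : Fin (ν i)), ∃ V : Set (Fin m → ℂ),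
      IsOpen V ∧ x₀ ∈ V ∧ V ⊆ Ω ∧
      ∃ g : (Fin m → ℂ) → ℂ, DifferentiableOn ℂ g V ∧ g x₀ = r i k ∧
        ∀ x ∈ V, ∑ j ∈ Finset.range (ν i + 1), A i j x * (g x) ^ j = 0 := by
    intro i k
    set Acoef : (Fin m → ℂ) → (Fin (ν i + 1) → ℂ) := fun x j => A i (j : ℕ) x with hAc
    have hAcdiff : DifferentiableOn ℂ Acoef Ω :=
      differentiableOn_pi.mpr fun j => hA i j (Nat.lt_succ_iff.mp j.isLt)
    have hroot0 : ∑ j : Fin (ν i + 1), Acoef x₀ j * (r i k) ^ (j : ℕ) = 0 := by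
      rw [Fin.sum_univ_eq_sum_range (fun j => A i j x₀ * (r i k) ^ j) (ν i + 1)]
      exact (hrspec i (r i k)).mpr ⟨k, rfl⟩
    have hsimple0 : ∑ j : Fin (ν i + 1),
        ((j : ℕ) : ℂ) * Acoef x₀ j * (r i k) ^ ((j : ℕ) - 1) ≠ 0 := by
      rw [Fin.sum_univ_eq_sum_range (fun j => (j : ℂ) * A i j x₀ * (r i k) ^ (j - 1)) (ν i + 1)]
      exact hsimple i k
    obtain ⟨Vc, hVcopen, hVcmem, ρ, hρdiff, hρval, hρroot⟩ :=
      exists_root_fun (ν i) (Acoef x₀) (r i k) hroot0 hsimple0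
    refine ⟨Ω ∩ Acoef ⁻¹' Vc,
      hAcdiff.continuousOn.isOpen_inter_preimage hΩ hVcopen,
      ⟨hx₀, hVcmem⟩, Set.inter_subset_left, fun x => ρ (Acoef x), ?_, by exact hρval, ?_⟩
    · exact hρdiff.comp (hAcdiff.mono Set.inter_subset_left) fun x hx => hx.2
    · intro x hx
      have h := hρroot (Acoef x) hx.2
      rw [Fin.sum_univ_eq_sum_range (fun j => A i j x * (ρ (Acoef x)) ^ j) (ν i + 1)] at h
      exact h
  choose V hVopen hVmem hVsub g hgdiff hgval hgroot using hloc
  -- leading coefficient sets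
  have hLopen : ∀ i : Fin d, IsOpen (Ω ∩ A i (ν i) ⁻¹' {(0 : ℂ)}ᶜ) := fun i =>
    (hA i (ν i) le_rfl).continuousOn.isOpen_inter_preimage hΩ isOpen_compl_singleton
  -- distinctness sets
  have hdis : ∀ (i : Fin d) (k k' : Fin (ν i)), ∃ s : Set (Fin m → ℂ),
      IsOpen s ∧ x₀ ∈ s ∧ (k ≠ k' → ∀ x ∈ s, g i k x ≠ g i k' x) := by
    intro i k k'
    by_cases hkk : k = k'
    · exact ⟨Set.univ, isOpen_univ, trivial, fun h => absurd hkk h⟩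
    · refine ⟨(V i k ∩ V i k') ∩ (fun x => g i k x - g i k' x) ⁻¹' {(0 : ℂ)}ᶜ, ?_, ?_, ?_⟩
      · apply ContinuousOn.isOpen_inter_preimage
        · exact ((hgdiff i k).mono Set.inter_subset_left).continuousOn.sub
            (((hgdiff i k').mono Set.inter_subset_right).continuousOn)
        · exact (hVopen i k).inter (hVopen i k')
        · exact isOpen_compl_singleton
      · refine ⟨⟨hVmem i k, hVmem i k'⟩, ?_⟩
        simp only [Set.mem_preimage, Set.mem_compl_iff, Set.mem_singleton_iff,
          hgval, sub_eq_zero]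
        exact fun h => hkk (hrinj i h)
      · intro _ x hx h
        exact hx.2 (by rw [Set.mem_singleton_iff, sub_eq_zero]; exact h)
  choose S hSopen hSmem hSdis using hdis
  set U := (⋂ i, (Ω ∩ A i (ν i) ⁻¹' {(0 : ℂ)}ᶜ)) ∩
    ((⋂ i, ⋂ k, V i k) ∩ (⋂ i, ⋂ k, ⋂ k', S i k k')) with hUdef
  have hUopen : IsOpen U := by
    refine IsOpen.inter (isOpen_iInter_of_finite hLopen) (IsOpen.inter ?_ ?_)
    · exact isOpen_iInter_of_finite fun i => isOpen_iInter_of_finite fun k => hVopen i k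
    · exact isOpen_iInter_of_finite fun i => isOpen_iInter_of_finite fun k =>
        isOpen_iInter_of_finite fun k' => hSopen i k k'
  have hUsub : U ⊆ Ω := fun x hx => (Set.mem_iInter.mp hx.1 ⟨0, hd⟩).1
  have hUmem : x₀ ∈ U := by
    refine ⟨Set.mem_iInter.mpr fun i => ⟨hx₀, hlead i⟩,
      Set.mem_iInter.mpr fun i => Set.mem_iInter.mpr fun k => hVmem i k,
      Set.mem_iInter.mpr fun i => Set.mem_iInter.mpr fun k =>
        Set.mem_iInter.mpr fun k' => hSmem i k k'⟩
  have hcardpi : (∏ i, ν i) = Fintype.card (∀ i : Fin d, Fin (ν i)) := by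
    simp [Fintype.card_pi]
  set e : Fin (∏ i, ν i) ≃ (∀ i, Fin (ν i)) :=
    (finCongr hcardpi).trans (Fintype.equivFin _).symm with hedef
  refine ⟨U, hUopen, hUsub, hUmem, fun k x i => g i (e k i) x, ?_, ?_⟩
  · intro k
    apply differentiableOn_pi.mpr
    intro i
    exact (hgdiff i (e k i)).mono
      (fun x hx => Set.mem_iInter.mp (Set.mem_iInter.mp hx.2.1 i) (e k i))
  · intro x hx
    have hV' : ∀ (i : Fin d) (kk : Fin (ν i)), x ∈ V i kk := fun i kk =>
      Set.mem_iInter.mp (Set.mem_iInter.mp hx.2.1 i) kk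
    have hS' : ∀ (i : Fin d) (k k' : Fin (ν i)), x ∈ S i k k' := fun i k k' =>
      Set.mem_iInter.mp (Set.mem_iInter.mp (Set.mem_iInter.mp hx.2.2 i) k) k'
    have hleadx : ∀ i : Fin d, A i (ν i) x ≠ 0 := fun i =>
      (Set.mem_iInter.mp hx.1 i).2
    have hginj : ∀ i : Fin d, Function.Injective (fun kk : Fin (ν i) => g i kk x) := by
      intro i kk kk' h
      by_contra hne
      exact hSdis i kk kk' hne x (hS' i kk kk') h
    have hchar : ∀ i : Fin d,
        ∀ w : ℂ, (∑ j ∈ Finset.range (ν i + 1), A i j x * w ^ j = 0 ↔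
          ∃ kk, w = g i kk x) :=
      fun i => (polyRootsAux (ν i) (fun j => A i j x) (hleadx i)
        (fun kk => g i kk x) (hginj i) (fun kk => hgroot i kk x (hV' i kk))).1
    constructor
    · intro k k' hkk'
      apply e.injective
      funext i
      exact hginj i (congrFun hkk' i)
    · ext w
      simp only [Set.mem_setOf_eq, Set.mem_range]
      constructor
      · intro hw
        choose κ hκ using fun i => (hchar i (w i)).mp (hw i)
        refine ⟨e.symm κ, ?_⟩
        funext i
        show g i (e (e.symm κ) i) x = w i
        rw [e.apply_symm_apply]
        exact (hκ i).symm
      · rintro ⟨k, rfl⟩ i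
        exact (hchar i _).mpr ⟨e k i, rfl⟩
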